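/- Let A, X^1, …, X^m be n×n complex matrices with 1 ≤ m ≤ n. Then the m-th derivative of the permanent at A, D^m per(A)(X^1,…,X^m) = ∂^m/∂t_1⋯∂t_m |_{t_1=⋯=t_m=0} per(A + t_1 X^1 + ⋯ + t_m X^m), equals Σ_{σ∈S_m} Σ_{J∈Q_{m,n}} per A(J; X^{σ(1)}, X^{σ(2)}, …, X^{σ(m)}). -/

import Mathlib

open scoped Classical

noncomputable section

open scoped Matrix.Norms.L2Operator

/-- The permanent of a square complex matrix:
`per A = Σ_σ a_{1σ(1)} ⋯ a_{nσ(n)}`. -/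
def perm {k : ℕ} (A : Matrix (Fin k) (Fin k) ℂ) : ℂ :=
  ∑ σ : Equiv.Perm (Fin k), ∏ i, A i (σ i)

/-- `A(J; X¹,…,Xᵐ)` : the matrix obtained from `A` by replacing, for each `p`,
column `J p` of `A` by column `J p` of `X p`, keeping all other columns unchanged. -/
def replCols {n m : ℕ} (A : Matrix (Fin n) (Fin n) ℂ) (J : Fin m → Fin n)
    (X : Fin m → Matrix (Fin n) (Fin n) ℂ) : Matrix (Fin n) (Fin n) ℂ :=
  Matrix.of fun i j => if h : ∃ p, J p = j then X h.choose i j else A i j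

/-- The permanent as a continuous multilinear map of the columns. -/
def permCLM (n : ℕ) : ContinuousMultilinearMap ℂ (fun _ : Fin n => (Fin n → ℂ)) ℂ :=
  ∑ σ : Equiv.Perm (Fin n),
    (ContinuousMultilinearMap.mkPiAlgebra ℂ (Fin n) ℂ).compContinuousLinearMap
      (fun j => ContinuousLinearMap.proj (σ j))

lemma permCLM_apply (n : ℕ) (c : Fin n → (Fin n → ℂ)) :
    permCLM n c = ∑ σ : Equiv.Perm (Fin n), ∏ j, c j (σ j) := by
  simp [permCLM, ContinuousMultilinearMap.sum_apply]

/-- The transpose as a continuous linear map from matrices to families of columns. -/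
def transCLM (n : ℕ) : Matrix (Fin n) (Fin n) ℂ →L[ℂ] (Fin n → Fin n → ℂ) :=
  LinearMap.toContinuousLinearMap
    { toFun := fun M => fun j i => M i j
      map_add' := fun _ _ => rfl
      map_smul' := fun _ _ => rfl }

lemma transCLM_apply (n : ℕ) (M : Matrix (Fin n) (Fin n) ℂ) (j i : Fin n) :
    transCLM n M j i = M i j := by
  simp [transCLM]
  rfl

lemma perm_eq_permCLM_trans {n : ℕ} (M : Matrix (Fin n) (Fin n) ℂ) :
    perm M = permCLM n (transCLM n M) := by
  rw [permCLM_apply, perm]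
  refine Fintype.sum_equiv (Equiv.inv (Equiv.Perm (Fin n))) _ _ (fun σ => ?_)
  simp only [Equiv.inv_apply]
  rw [← Equiv.prod_comp σ (fun j => transCLM n M j (σ⁻¹ j))]
  simp [transCLM_apply]

lemma replCols_comp_perm {n m : ℕ} (A : Matrix (Fin n) (Fin n) ℂ) {J : Fin m → Fin n}
    (hJ : Function.Injective J) (σ : Equiv.Perm (Fin m))
    (X : Fin m → Matrix (Fin n) (Fin n) ℂ) :
    replCols A (fun p => J (σ⁻¹ p)) X = replCols A J (fun p => X (σ p)) := by
  funext i j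
  show (if h : ∃ p, J (σ⁻¹ p) = j then X h.choose i j else A i j)
    = (if h : ∃ q, J q = j then X (σ h.choose) i j else A i j)
  by_cases h : ∃ q, J q = j
  · have h' : ∃ p, J (σ⁻¹ p) = j := ⟨σ h.choose, by simp [h.choose_spec]⟩
    rw [dif_pos h', dif_pos h]
    have : σ⁻¹ h'.choose = h.choose := hJ (h'.choose_spec.trans h.choose_spec.symm)
    rw [show h'.choose = σ h.choose by rw [← this]; simp]
  · have h' : ¬ ∃ p, J (σ⁻¹ p) = j := fun ⟨p, hp⟩ => h ⟨σ⁻¹ p, hp⟩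
    rw [dif_neg h', dif_neg h]

/-- The parametrization of embeddings `Fin m ↪ Fin n` by pairs of a permutation and a
strictly monotone map. -/
def PhiEmb (n m : ℕ) :
    Equiv.Perm (Fin m) × {J : Fin m → Fin n // StrictMono J} → (Fin m ↪ Fin n) :=
  fun x => ⟨fun p => x.2.1 (x.1⁻¹ p), x.2.2.injective.comp (Equiv.injective _)⟩

lemma PhiEmb_bijective (n m : ℕ) : Function.Bijective (PhiEmb n m) := by
  constructor
  · rintro ⟨σ, J, hJ⟩ ⟨σ', J', hJ'⟩ h
    have hfun : (fun p => J (σ⁻¹ p)) = fun p => J' (σ'⁻¹ p) :=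
      congrArg (fun e => (e : Fin m ↪ Fin n).toFun) h
    have hrange : Set.range (fun p => J (σ⁻¹ p)) = Set.range (fun p => J' (σ'⁻¹ p)) := by
      rw [hfun]
    have e1 : Set.range (fun p => J (σ⁻¹ p)) = Set.range J :=
      Set.range_comp J ⇑σ⁻¹ ▸ by rw [Equiv.range_eq_univ, Set.image_univ]
    have e2 : Set.range (fun p => J' (σ'⁻¹ p)) = Set.range J' :=
      Set.range_comp J' ⇑σ'⁻¹ ▸ by rw [Equiv.range_eq_univ, Set.image_univ]
    rw [e1, e2] at hrange
    have inst : WellFoundedLT (Fin m) := inferInstance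
    have hJJ : J = J' := (@StrictMono.range_inj (Fin m) (Fin n) _ _ inst _ _ hJ hJ').1 hrange
    subst hJJ
    have hσ : σ = σ' := by
      have : ∀ p, σ⁻¹ p = σ'⁻¹ p := fun p => hJ.injective (congrFun hfun p)
      have h2 : σ⁻¹ = σ'⁻¹ := Equiv.ext this
      rw [← inv_inv σ, h2, inv_inv]
    subst hσ; rfl
  · intro e
    set s : Finset (Fin n) := Finset.univ.map e with hs
    have hcard : s.card = m := by simp [hs]
    set J : Fin m → Fin n := ⇑(s.orderEmbOfFin hcard) with hJdef
    have hJ : StrictMono J := (s.orderEmbOfFin hcard).strictMono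
    have hrange : Set.range J = Set.range ⇑e := by
      rw [hJdef, Finset.range_orderEmbOfFin, hs]
      simp [Finset.coe_map]
    have hq : ∀ p, ∃ q, J q = e p := fun p => by
      have : e p ∈ Set.range J := by rw [hrange]; exact ⟨p, rfl⟩
      exact this
    set g : Fin m → Fin m := fun p => (hq p).choose with hg
    have hgJ : ∀ p, J (g p) = e p := fun p => (hq p).choose_spec
    have hginj : Function.Injective g := by
      intro p p' hpp'
      apply e.injective
      rw [← hgJ, ← hgJ, hpp']
    have hgbij : Function.Bijective g := Finite.injective_iff_bijective.1 hginj
    refine ⟨⟨(Equiv.ofBijective g hgbij)⁻¹, ⟨J, hJ⟩⟩, ?_⟩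
    apply Function.Embedding.ext
    intro p
    show J (((Equiv.ofBijective g hgbij)⁻¹)⁻¹ p) = e p
    rw [inv_inv]
    exact hgJ p

lemma term_eq {n m : ℕ} (A : Matrix (Fin n) (Fin n) ℂ)
    (X : Fin m → Matrix (Fin n) (Fin n) ℂ) (e : Fin m ↪ Fin n)
    (inst : DecidableEq (Fin n)) (instD : ∀ j, Decidable (j ∈ Set.range ⇑e)) :
    (permCLM n) (fun j => @dite _ (j ∈ Set.range ⇑e) (instD j)
        (fun h => transCLM n (X ((@Function.Embedding.toEquivRange _ _ _ inst e).symm ⟨j, h⟩)) j)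
        (fun _ => transCLM n A j))
      = perm (replCols A ⇑e X) := by
  rw [perm_eq_permCLM_trans]
  congr 1
  funext j
  by_cases h : ∃ p, e p = j
  · have h' : j ∈ Set.range ⇑e := h
    rw [dif_pos h']
    funext i
    rw [transCLM_apply, transCLM_apply]
    show X ((@Function.Embedding.toEquivRange _ _ _ inst e).symm ⟨j, h'⟩) i j
      = replCols A (⇑e) X i j
    simp only [replCols, Matrix.of_apply]
    rw [dif_pos h]
    congr 1
    apply e.injective
    rw [h.choose_spec]
    have := @Function.Embedding.toEquivRange_apply _ _ _ inst e
      ((@Function.Embedding.toEquivRange _ _ _ inst e).symm ⟨j, h'⟩)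
    rw [Equiv.apply_symm_apply] at this
    exact congrArg Subtype.val this.symm
  · have h' : j ∉ Set.range ⇑e := h
    rw [dif_neg h']
    funext i
    rw [transCLM_apply, transCLM_apply]
    show A i j = replCols A (⇑e) X i j
    simp only [replCols, Matrix.of_apply]
    rw [dif_neg h]

set_option maxHeartbeats 2000000 in
/-- for `1 ≤ m ≤ n`,
`D^m per(A)(X¹,…,Xᵐ) = Σ_{σ ∈ S_m} Σ_{J ∈ Q_{m,n}} per A(J; X^{σ(1)},…,X^{σ(m)})`,
where `Q_{m,n}` is the set of strictly increasing `m`-tuples of indices. -/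
theorem iteratedFDeriv_perm_eq_sum_replCols (n m : ℕ) (hm : 1 ≤ m) (hmn : m ≤ n)
    (A : Matrix (Fin n) (Fin n) ℂ) (X : Fin m → Matrix (Fin n) (Fin n) ℂ) :
    iteratedFDeriv ℂ m perm A X =
      ∑ σ : Equiv.Perm (Fin m), ∑ J : {J : Fin m → Fin n // StrictMono J},
        perm (replCols A J.1 fun p => X (σ p)) := by
  have hperm : perm = (permCLM n) ∘ (transCLM n) := funext fun M => perm_eq_permCLM_trans M
  rw [hperm, ContinuousLinearMap.iteratedFDeriv_comp_right (transCLM n)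
    ((permCLM n).contDiff (n := m)) A le_rfl]
  rw [ContinuousMultilinearMap.compContinuousLinearMap_apply,
    ContinuousMultilinearMap.iteratedFDeriv_eq]
  unfold ContinuousMultilinearMap.iteratedFDeriv
  rw [ContinuousMultilinearMap.sum_apply]
  simp only [ContinuousMultilinearMap.iteratedFDerivComponent_apply, Pi.compRightL_apply]
  rw [← hperm]
  trans ∑ e : Fin m ↪ Fin n, perm (replCols A ⇑e X)
  · exact Finset.sum_congr rfl fun e _ => term_eq A X e _ _
  refine Eq.trans ((Fintype.sum_bijective (PhiEmb n m) (PhiEmb_bijective n m)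
    (fun x => perm (replCols A x.2.1 fun p => X (x.1 p)))
    (fun e => perm (replCols A ⇑e X)) (fun x => ?_)).symm) ?_
  · show perm (replCols A x.2.1 fun p => X (x.1 p))
      = perm (replCols A (fun p => x.2.1 (x.1⁻¹ p)) X)
    rw [replCols_comp_perm A x.2.2.injective x.1 X]
  · exact Fintype.sum_prod_type
     (f := fun x : Equiv.Perm (Fin m) × {J : Fin m → Fin n // StrictMono J} =>
       perm (replCols A x.2.1 fun p => X (x.1 p)))
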